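/- Let w_a < w_b be beam widths, let d_a and d_b be the depths (levels) at which monobeam with widths w_a and w_b respectively terminates, and let beam_{i,d} denote the beam of the width-w_i search when its stopping condition is tested at the beginning of level d. Then for every depth d with 1 ≤ d ≤ min(d_a, d_b) and every slot j with 1 ≤ j ≤ w_a, beam_{a,d}[j] = beam_{b,d}[j]; that is, the two searches agree on the first w_a slots of the beam at every common level. -/

import Mathlib

open scoped Classical

noncomputable section

/-- A search space: start state, successor function giving (child, cost) pairs with
nonnegative costs, goal predicate, and a nonnegative heuristic. -/
structure SearchSpace (σ : Type) where
  start : σ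
  succ : σ → List (σ × ℝ)
  isGoal : σ → Bool
  h : σ → ℝ
  succ_nonneg : ∀ s, ∀ p ∈ succ s, 0 ≤ p.2
  h_nonneg : ∀ s, 0 ≤ h s

/-- A search node: the state it represents, the cost `g` of the path by which it was
reached, and its (pathmax-corrected) `f`-value. -/
structure Node (σ : Type) where
  state : σ
  g : ℝ
  f : ℝ

variable {σ : Type}

/-- `PathCost S s t c`: there is a path from `s` to `t` of total cost `c`. -/
inductive PathCost (S : SearchSpace σ) : σ → σ → ℝ → Prop
  | refl (s : σ) : PathCost S s s 0
  | step {s t u : σ} {c c' : ℝ} : (t, c) ∈ S.succ s → PathCost S t u c' →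
      PathCost S s u (c + c')

/-- The heuristic is admissible: `h s` is at most the cost of any path from `s` to a goal. -/
def SearchSpace.Admissible (S : SearchSpace σ) : Prop :=
  ∀ s t c, S.isGoal t = true → PathCost S s t c → S.h s ≤ c

/-- The space contains no infinite sequences of zero-cost operators. -/
def SearchSpace.NoInfiniteZeroCost (S : SearchSpace σ) : Prop :=
  ¬ ∃ seq : ℕ → σ, ∀ i, (seq (i + 1), (0 : ℝ)) ∈ S.succ (seq i)

/-- Ordering used to select candidates: minimum `f`, ties broken on lower `h`,
remaining ties broken by the fixed deterministic key `key`. -/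
def rank (S : SearchSpace σ) (key : Node σ → ℕ) (n : Node σ) : ℝ ×ₗ (ℝ ×ₗ ℕ) :=
  toLex (n.f, toLex (S.h n.state, key n))

/-- Remove-min from the candidates priority queue (deterministic). -/
def selectMin (S : SearchSpace σ) (key : Node σ → ℕ) (cands : List (Node σ)) :
    Option (Node σ) :=
  cands.argmin (rank S key)

/-- Expanding a node: children get `g` increased by the action cost, and their
`f`-value is pathmax-corrected to be at least the parent's `f`. -/
def children (S : SearchSpace σ) (n : Node σ) : List (Node σ) :=
  (S.succ n.state).map fun p =>
    { state := p.1, g := n.g + p.2, f := max (n.g + p.2 + S.h p.1) n.f }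

/-- Cost of the incumbent solution (`⊤` when there is none). -/
def incCost (inc : Option (Node σ)) : WithTop ℝ :=
  inc.elim ⊤ fun n => (n.f : WithTop ℝ)

/-- Record any goal children whose `f`-value beats the incumbent. -/
def updateIncumbent (inc : Option (Node σ)) (goals : List (Node σ)) : Option (Node σ) :=
  goals.foldl (fun inc c => if (c.f : WithTop ℝ) < incCost inc then some c else inc) inc

/-- State maintained while processing the slots of one level. -/
structure LevelState (σ : Type) where
  candidates : List (Node σ)
  nextBeam : List (Option (Node σ))
  incumbent : Option (Node σ)

/-- Expansion part of processing one slot: expand the node in the slot (if any),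
handle goal children via the incumbent, and add non-goal children to candidates. -/
def expandSlot (S : SearchSpace σ) (st : LevelState σ) (slot : Option (Node σ)) :
    LevelState σ :=
  match slot with
  | none => st
  | some n =>
    let kids := children S n
    { candidates := st.candidates ++ kids.filter (fun c => !(S.isGoal c.state)),
      nextBeam := st.nextBeam,
      incumbent := updateIncumbent st.incumbent (kids.filter (fun c => S.isGoal c.state)) }

/-- Process one slot `c` of the beam: expand, then (if candidates is nonempty)
remove the minimum-`f` candidate and place it in slot `c` of the next beam. -/
def processSlot (S : SearchSpace σ) (key : Node σ → ℕ) (st : LevelState σ)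
    (slot : Option (Node σ)) : LevelState σ :=
  let st1 := expandSlot S st slot
  match selectMin S key st1.candidates with
  | none => { st1 with nextBeam := st1.nextBeam ++ [none] }
  | some n => { st1 with candidates := st1.candidates.erase n,
                         nextBeam := st1.nextBeam ++ [some n] }

/-- One level of monobeam: process the slots in order, starting from an empty
candidates queue, producing the next beam and the updated incumbent. -/
def levelStep (S : SearchSpace σ) (key : Node σ → ℕ) (beam : List (Option (Node σ)))
    (inc : Option (Node σ)) : List (Option (Node σ)) × Option (Node σ) :=
  let st := beam.foldl (processSlot S key) ⟨[], [], inc⟩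
  (st.nextBeam, st.incumbent)

/-- The root node. -/
def startNode (S : SearchSpace σ) : Node σ := ⟨S.start, 0, S.h S.start⟩

/-- Initial beam of width `w`: the start node in slot 1, all other slots empty. -/
def initBeam (S : SearchSpace σ) (w : ℕ) : List (Option (Node σ)) :=
  some (startNode S) :: List.replicate (w - 1) none

/-- The (beam, incumbent) pair of monobeam with width `w` when the stopping
condition is tested for the `t`-th time (`t = 0` is the initial beam). -/
def run (S : SearchSpace σ) (key : Node σ → ℕ) (w : ℕ) :
    ℕ → List (Option (Node σ)) × Option (Node σ)
  | 0 => (initBeam S w, none)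
  | t + 1 => let p := run S key w t; levelStep S key p.1 p.2

/-- Stopping condition: no slot of the beam holds a node with `f`-value less than
the incumbent solution cost. -/
def stopCond (p : List (Option (Node σ)) × Option (Node σ)) : Prop :=
  ∀ n : Node σ, some n ∈ p.1 → incCost p.2 ≤ (n.f : WithTop ℝ)

/-- Monobeam with width `w` terminates after testing the stopping condition `t+… `
times: `t` is the first time the stopping condition holds. -/
def TerminatesAt (S : SearchSpace σ) (key : Node σ → ℕ) (w t : ℕ) : Prop :=
  stopCond (run S key w t) ∧ ∀ t' < t, ¬ stopCond (run S key w t')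

/-- Monobeam with width `w` terminates and returns the solution node `n`. -/
def Returns (S : SearchSpace σ) (key : Node σ → ℕ) (w : ℕ) (n : Node σ) : Prop :=
  ∃ t, TerminatesAt S key w t ∧ (run S key w t).2 = some n



/-- `expandSlot` leaves `nextBeam` unchanged. -/
lemma expandSlot_nextBeam (S : SearchSpace σ) (st : LevelState σ) (slot : Option (Node σ)) :
    (expandSlot S st slot).nextBeam = st.nextBeam := by
  cases slot <;> rfl

/-- The candidates produced by `expandSlot` depend only on the old candidates. -/
lemma expandSlot_cb (S : SearchSpace σ) {st st' : LevelState σ} (slot : Option (Node σ))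
    (hc : st.candidates = st'.candidates) (hb : st.nextBeam = st'.nextBeam) :
    (expandSlot S st slot).candidates = (expandSlot S st' slot).candidates ∧
    (expandSlot S st slot).nextBeam = (expandSlot S st' slot).nextBeam := by
  cases slot with
  | none => exact ⟨hc, hb⟩
  | some n => simp [expandSlot, hc, hb]

/-- The candidates/nextBeam produced by `processSlot` do not depend on the incumbent. -/
lemma processSlot_cb (S : SearchSpace σ) (key : Node σ → ℕ) {st st' : LevelState σ}
    (slot : Option (Node σ))
    (hc : st.candidates = st'.candidates) (hb : st.nextBeam = st'.nextBeam) :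
    (processSlot S key st slot).candidates = (processSlot S key st' slot).candidates ∧
    (processSlot S key st slot).nextBeam = (processSlot S key st' slot).nextBeam := by
  obtain ⟨hc1, hb1⟩ := expandSlot_cb S slot hc hb
  simp only [processSlot, hc1, hb1]
  cases h : selectMin S key (expandSlot S st' slot).candidates <;> simp [h]

lemma foldl_cb (S : SearchSpace σ) (key : Node σ → ℕ) (L : List (Option (Node σ))) :
    ∀ {st st' : LevelState σ}, st.candidates = st'.candidates → st.nextBeam = st'.nextBeam →
    (L.foldl (processSlot S key) st).candidates =
      (L.foldl (processSlot S key) st').candidates ∧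
    (L.foldl (processSlot S key) st).nextBeam =
      (L.foldl (processSlot S key) st').nextBeam := by
  induction L with
  | nil => exact fun hc hb => ⟨hc, hb⟩
  | cons a L ih =>
    intro st st' hc hb
    obtain ⟨hc1, hb1⟩ := processSlot_cb S key a hc hb
    exact ih hc1 hb1

/-- `processSlot` appends exactly one entry to `nextBeam`. -/
lemma processSlot_nextBeam (S : SearchSpace σ) (key : Node σ → ℕ) (st : LevelState σ)
    (slot : Option (Node σ)) :
    ∃ x, (processSlot S key st slot).nextBeam = st.nextBeam ++ [x] := by
  simp only [processSlot]
  cases h : selectMin S key (expandSlot S st slot).candidates with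
  | none => exact ⟨none, by simp [expandSlot_nextBeam]⟩
  | some n => exact ⟨some n, by simp [expandSlot_nextBeam]⟩

lemma foldl_nextBeam (S : SearchSpace σ) (key : Node σ → ℕ) (L : List (Option (Node σ))) :
    ∀ st : LevelState σ, ∃ t : List (Option (Node σ)),
      (L.foldl (processSlot S key) st).nextBeam = st.nextBeam ++ t ∧ t.length = L.length := by
  induction L with
  | nil => exact fun st => ⟨[], by simp⟩
  | cons a L ih =>
    intro st
    obtain ⟨x, hx⟩ := processSlot_nextBeam S key st a
    obtain ⟨t, ht, hl⟩ := ih (processSlot S key st a)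
    exact ⟨x :: t, by simp [List.foldl_cons, ht, hx], by simp [hl]⟩

lemma run_length (S : SearchSpace σ) (key : Node σ → ℕ) {w : ℕ} (hw : 1 ≤ w) (d : ℕ) :
    ((run S key w d).1).length = w := by
  induction d with
  | zero => simp [run, initBeam]; omega
  | succ d ih =>
    show ((levelStep S key (run S key w d).1 (run S key w d).2).1).length = w
    obtain ⟨t, ht, hl⟩ := foldl_nextBeam S key (run S key w d).1
      ⟨[], [], (run S key w d).2⟩
    simpa [levelStep, ht, hl] using ih

lemma run_take (S : SearchSpace σ) (key : Node σ → ℕ) {wa wb : ℕ}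
    (hwa : 1 ≤ wa) (hw : wa ≤ wb) (d : ℕ) :
    ((run S key wa d).1).take wa = ((run S key wb d).1).take wa := by
  induction d with
  | zero =>
    simp only [run, initBeam]
    cases wa with
    | zero => omega
    | succ k =>
      simp [List.take_replicate]
      omega
  | succ d ih =>
    have hwb : 1 ≤ wb := le_trans hwa hw
    have hla : ((run S key wa d).1).length = wa := run_length S key hwa d
    have hlb : ((run S key wb d).1).length = wb := run_length S key hwb d
    set A := (run S key wa d).1 with hA
    set B := (run S key wb d).1 with hB
    have hAt : A.take wa = A := by rw [← hla]; exact List.take_length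
    -- split B as take ++ drop
    have hBsplit : B = B.take wa ++ B.drop wa := (List.take_append_drop wa B).symm
    show ((levelStep S key A (run S key wa d).2).1).take wa
        = ((levelStep S key B (run S key wb d).2).1).take wa
    simp only [levelStep]
    set sA := A.foldl (processSlot S key) ⟨[], [], (run S key wa d).2⟩ with hsA
    set sB1 := (B.take wa).foldl (processSlot S key) ⟨[], [], (run S key wb d).2⟩ with hsB1
    have hfold : B.foldl (processSlot S key) ⟨[], [], (run S key wb d).2⟩
        = (B.drop wa).foldl (processSlot S key) sB1 := by
      conv_lhs => rw [hBsplit]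
      rw [List.foldl_append]
    have heq : sA.nextBeam = sB1.nextBeam := by
      have : A.foldl (processSlot S key) ⟨[], [], (run S key wa d).2⟩
          = (B.take wa).foldl (processSlot S key) ⟨[], [], (run S key wa d).2⟩ := by
        rw [← ih, hAt]
      rw [hsA, this]
      exact (foldl_cb S key (B.take wa)
        (st := ⟨[], [], (run S key wa d).2⟩)
        (st' := ⟨[], [], (run S key wb d).2⟩) rfl rfl).2
    have hlenA : sA.nextBeam.length = wa := by
      obtain ⟨t, ht, hl⟩ := foldl_nextBeam S key A (⟨[], [], (run S key wa d).2⟩ : LevelState σ)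
      rw [hsA, ht]; simp [hl, hla]
    obtain ⟨t, ht, _⟩ := foldl_nextBeam S key (B.drop wa) sB1
    rw [hfold, ht, ← heq, List.take_left' hlenA, ← hlenA]
    exact List.take_length

/-- Lemma 2: let `wa < wb` be beam widths and let `ta`, `tb` be the
(0-indexed) levels at which monobeam with widths `wa` and `wb` respectively terminates
(the first times the stopping condition holds).  Then at every level `d ≤ min ta tb`
(i.e. every level at which both searches test the stopping condition), the two beams
agree on all slots `j < wa`. -/
theorem monobeam_identical_levels
    {σ : Type} (S : SearchSpace σ) (key : Node σ → ℕ)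
    (wa wb : ℕ) (hwa : 1 ≤ wa) (hw : wa < wb) (ta tb : ℕ)
    (hta : TerminatesAt S key wa ta) (htb : TerminatesAt S key wb tb)
    (d : ℕ) (hd : d ≤ min ta tb) (j : ℕ) (hj : j < wa) :
    ((run S key wa d).1)[j]? = ((run S key wb d).1)[j]? := by
  have h := run_take S key hwa (le_of_lt hw) d
  calc ((run S key wa d).1)[j]? = (((run S key wa d).1).take wa)[j]? :=
        (List.getElem?_take_of_lt hj).symm
    _ = (((run S key wb d).1).take wa)[j]? := by rw [h]
    _ = ((run S key wb d).1)[j]? := List.getElem?_take_of_lt hj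

end
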